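/- Let x be a bounded real sequence and let a be a sub-limit of x. If {x(n_k)} and {x(m_t)} are two essential subsequences of a, then w^u({x(n_k)}) = w^u({x(m_t)}) and w_l({x(n_k)}) = w_l({x(m_t)}). -/

import Mathlib

open Filter

/-- A bounded real sequence. -/
def IsBddSeq (x : ℕ → ℝ) : Prop := ∃ C : ℝ, ∀ n, |x n| ≤ C

/-- The sup norm of a (bounded) real sequence. -/
noncomputable def supNorm (x : ℕ → ℝ) : ℝ := ⨆ n, |x n|

/-- A Banach limit: a linear functional on the space of bounded real sequences
(extended arbitrarily to all sequences) that is positive, shift-invariant,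
and sends the constant-one sequence to `1`. -/
def IsBanachLimit (L : (ℕ → ℝ) → ℝ) : Prop :=
  (∀ x y : ℕ → ℝ, IsBddSeq x → IsBddSeq y → L (x + y) = L x + L y) ∧
  (∀ (c : ℝ) (x : ℕ → ℝ), IsBddSeq x → L (c • x) = c * L x) ∧
  (∀ x : ℕ → ℝ, IsBddSeq x → (∀ n, 0 ≤ x n) → 0 ≤ L x) ∧
  (∀ x : ℕ → ℝ, IsBddSeq x → L (fun n => x (n + 1)) = L x) ∧
  L (fun _ => 1) = 1

/-- A bounded sequence is almost convergent if all Banach limits agree on it. -/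
def AlmostConvergent (x : ℕ → ℝ) : Prop :=
  ∃ c : ℝ, ∀ L : (ℕ → ℝ) → ℝ, IsBanachLimit L → L x = c

/-- `a` is a sub-limit of `x` if some subsequence of `x` converges to `a`. -/
def IsSubLimit (x : ℕ → ℝ) (a : ℝ) : Prop :=
  ∃ n : ℕ → ℕ, StrictMono n ∧ Tendsto (fun k => x (n k)) atTop (nhds a)

/-- The set of all sub-limits of `x`. -/
def subLimitSet (x : ℕ → ℝ) : Set ℝ := {a | IsSubLimit x a}

/-- `A({k : i ≤ n_k ≤ i + len - 1})`: the number of indices of the subsequence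
given by `n` falling in the window `[i, i + len - 1]`. -/
noncomputable def windowCount (n : ℕ → ℕ) (i len : ℕ) : ℕ :=
  {k : ℕ | i ≤ n k ∧ n k < i + len}.ncard

/-- Upper weight of a subsequence with index map `n`. -/
noncomputable def upperWeight (n : ℕ → ℕ) : ℝ :=
  limsup (fun len : ℕ => ⨆ i : ℕ, (windowCount n i len : ℝ) / len) atTop

/-- Lower weight of a subsequence with index map `n`. -/
noncomputable def lowerWeight (n : ℕ → ℕ) : ℝ :=
  liminf (fun len : ℕ => ⨅ i : ℕ, (windowCount n i len : ℝ) / len) atTop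

/-- `n` indexes an essential subsequence of `x` for the sub-limit `a`:
it converges to `a` and every subsequence of `x` converging to `a` has all
but finitely many of its indices among the `n k`. -/
def IsEssentialSubseq (x : ℕ → ℝ) (a : ℝ) (n : ℕ → ℕ) : Prop :=
  StrictMono n ∧ Tendsto (fun k => x (n k)) atTop (nhds a) ∧
  ∀ m : ℕ → ℕ, StrictMono m → Tendsto (fun t => x (m t)) atTop (nhds a) →
    {t : ℕ | ¬ ∃ k, n k = m t}.Finite

/-- The weight `w(a)` of a sub-limit `a` of `x` exists and equals `w`:
some essential subsequence of `a` has upper weight and lower weight both `w`. -/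
def HasSubLimitWeight (x : ℕ → ℝ) (a : ℝ) (w : ℝ) : Prop :=
  ∃ n : ℕ → ℕ, IsEssentialSubseq x a n ∧ upperWeight n = w ∧ lowerWeight n = w

/-- `A({k : x(k+i) ∈ S, k = 0, …, len-1})`. -/
noncomputable def seqCount (x : ℕ → ℝ) (S : Set ℝ) (i len : ℕ) : ℕ :=
  {k : ℕ | k < len ∧ x (k + i) ∈ S}.ncard

/-- The weight of `x` with respect to `S` exists and equals `w`:
`A({k : x(k+i) ∈ S, k = 0,…,n-1})/n → w` as `n → ∞`, uniformly in `i`. -/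
def HasSetWeight (x : ℕ → ℝ) (S : Set ℝ) (w : ℝ) : Prop :=
  ∀ ε : ℝ, 0 < ε → ∃ N : ℕ, ∀ n ≥ N, ∀ i : ℕ,
    |(seqCount x S i n : ℝ) / n - w| < ε

/-- `x` is properly distributed: every Borel subset of `[-‖x‖∞, ‖x‖∞]`
has a weight with respect to `x`. -/
def ProperlyDistributed (x : ℕ → ℝ) : Prop :=
  ∀ S : Set ℝ, MeasurableSet S → S ⊆ Set.Icc (-(supNorm x)) (supNorm x) →
    ∃ w : ℝ, HasSetWeight x S w

/-- `s` is simply distributed: it takes finitely many values, and each value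
has a weight with respect to `s`. -/
def SimplyDistributed (s : ℕ → ℝ) : Prop :=
  (Set.range s).Finite ∧ ∀ a ∈ Set.range s, ∃ w : ℝ, HasSetWeight s {a} w


lemma myWc_eq {n : ℕ → ℕ} (hn : Function.Injective n) (i len : ℕ) :
    (windowCount n i len : ℕ) = (Set.range n ∩ Set.Ico i (i + len)).ncard := by
  have h1 : {k : ℕ | i ≤ n k ∧ n k < i + len} = n ⁻¹' (Set.Ico i (i + len)) := by
    ext k; simp [Set.mem_Ico]
  rw [windowCount, h1, ← Set.ncard_image_of_injective _ hn,
    Set.image_preimage_eq_inter_range, Set.inter_comm]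

lemma myIcoFin (i len : ℕ) : (Set.Ico i (i + len)).Finite := Set.finite_Ico _ _

lemma myWc_le {n : ℕ → ℕ} (hn : Function.Injective n) (i len : ℕ) :
    (windowCount n i len : ℕ) ≤ len := by
  rw [myWc_eq hn]
  calc (Set.range n ∩ Set.Ico i (i + len)).ncard
      ≤ (Set.Ico i (i + len)).ncard :=
        Set.ncard_le_ncard Set.inter_subset_right (myIcoFin i len)
    _ = len := by rw [Set.ncard_eq_toFinset_card']; simp

lemma myWc_diff {n m : ℕ → ℕ} (hn : Function.Injective n) (hm : Function.Injective m)
    (hfin : (Set.range n \ Set.range m).Finite) (i len : ℕ) :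
    (windowCount n i len : ℕ) ≤ windowCount m i len + (Set.range n \ Set.range m).ncard := by
  rw [myWc_eq hn, myWc_eq hm]
  calc (Set.range n ∩ Set.Ico i (i + len)).ncard
      ≤ ((Set.range m ∩ Set.Ico i (i + len)) ∪ (Set.range n \ Set.range m)).ncard := by
        apply Set.ncard_le_ncard
        · rintro a ⟨han, haw⟩
          by_cases h : a ∈ Set.range m
          · exact Or.inl ⟨h, haw⟩
          · exact Or.inr ⟨han, h⟩
        · exact (((myIcoFin i len).inter_of_right _).union hfin)
    _ ≤ _ := Set.ncard_union_le _ _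

/-- the finite difference of ranges -/
lemma myRangeDiff {x : ℕ → ℝ} {a : ℝ} {n m : ℕ → ℕ}
    (hn : IsEssentialSubseq x a n) (hm : IsEssentialSubseq x a m) :
    (Set.range m \ Set.range n).Finite := by
  have h := hn.2.2 m hm.1 hm.2.1
  have : Set.range m \ Set.range n ⊆ m '' {t : ℕ | ¬ ∃ k, n k = m t} := by
    rintro b ⟨⟨t, rfl⟩, hb⟩
    exact ⟨t, by simpa [Set.range] using hb, rfl⟩
  exact (h.image m).subset this

lemma myBound {n : ℕ → ℕ} (hn : Function.Injective n) :
    ∀ len : ℕ, 0 ≤ (⨆ i : ℕ, (windowCount n i len : ℝ) / len) ∧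
      (⨆ i : ℕ, (windowCount n i len : ℝ) / len) ≤ 1 := by
  intro len
  have hb : ∀ i, (windowCount n i len : ℝ) / len ≤ 1 := by
    intro i
    rcases Nat.eq_zero_or_pos len with h | h
    · simp [h]
    · rw [div_le_one (by positivity)]
      exact_mod_cast myWc_le hn i len
  constructor
  · refine le_trans (by positivity) (le_ciSup ⟨1, ?_⟩ 0)
    rintro y ⟨i, rfl⟩; exact hb i
  · exact ciSup_le hb

lemma myBoundInf {n : ℕ → ℕ} (hn : Function.Injective n) :
    ∀ len : ℕ, 0 ≤ (⨅ i : ℕ, (windowCount n i len : ℝ) / len) ∧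
      (⨅ i : ℕ, (windowCount n i len : ℝ) / len) ≤ 1 := by
  intro len
  have hb : ∀ i, (windowCount n i len : ℝ) / len ≤ 1 := by
    intro i
    rcases Nat.eq_zero_or_pos len with h | h
    · simp [h]
    · rw [div_le_one (by positivity)]
      exact_mod_cast myWc_le hn i len
  constructor
  · exact le_ciInf fun i => by positivity
  · exact le_trans (ciInf_le ⟨0, by rintro y ⟨i, rfl⟩; positivity⟩ 0) (hb 0)

lemma myLimsupLe {f g e : ℕ → ℝ} (hf0 : ∀ l, 0 ≤ f l) (hg1 : ∀ l, g l ≤ 1)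
    (he : Tendsto e atTop (nhds 0)) (h : ∀ l, f l ≤ g l + e l) :
    limsup f atTop ≤ limsup g atTop := by
  have hcb : IsCoboundedUnder (· ≤ ·) atTop f :=
    IsBoundedUnder.isCoboundedUnder_le (isBoundedUnder_of ⟨0, hf0⟩)
  have hgb : IsBoundedUnder (· ≤ ·) atTop g := isBoundedUnder_of ⟨1, hg1⟩
  refine le_of_forall_pos_le_add fun ε hε => ?_
  have h1 : ∀ᶠ l in atTop, g l < limsup g atTop + ε / 2 :=
    eventually_lt_of_limsup_lt (by linarith) hgb
  have h2 : ∀ᶠ l in atTop, e l < ε / 2 :=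
    (he.eventually (eventually_lt_nhds (half_pos hε))).mono fun l hl => hl
  refine limsup_le_of_le hcb ?_
  filter_upwards [h1, h2] with l hl1 hl2
  have := h l; linarith

lemma myLiminfLe {f g e : ℕ → ℝ} (hf1 : ∀ l, f l ≤ 1) (hg0 : ∀ l, 0 ≤ g l)
    (he : Tendsto e atTop (nhds 0)) (h : ∀ l, g l - e l ≤ f l) :
    liminf g atTop ≤ liminf f atTop := by
  have hcb : IsCoboundedUnder (· ≥ ·) atTop f :=
    IsBoundedUnder.isCoboundedUnder_ge (isBoundedUnder_of ⟨1, hf1⟩)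
  have hgb : IsBoundedUnder (· ≥ ·) atTop g := isBoundedUnder_of ⟨0, hg0⟩
  have : ∀ ε : ℝ, 0 < ε → liminf g atTop ≤ liminf f atTop + ε := by
    intro ε hε
    have h1 : ∀ᶠ l in atTop, liminf g atTop - ε / 2 < g l :=
      eventually_lt_of_lt_liminf (by linarith) hgb
    have h2 : ∀ᶠ l in atTop, e l < ε / 2 :=
      (he.eventually (eventually_lt_nhds (half_pos hε))).mono fun l hl => hl
    have h3 : liminf g atTop - ε ≤ liminf f atTop := by
      refine le_liminf_of_le hcb ?_
      filter_upwards [h1, h2] with l hl1 hl2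
      have := h l; linarith
    linarith
  exact le_of_forall_pos_le_add this

lemma myUpperLe {x : ℕ → ℝ} {a : ℝ} {n m : ℕ → ℕ}
    (hn : IsEssentialSubseq x a n) (hm : IsEssentialSubseq x a m) :
    upperWeight n ≤ upperWeight m := by
  have hni : Function.Injective n := hn.1.injective
  have hmi : Function.Injective m := hm.1.injective
  have hfin : (Set.range n \ Set.range m).Finite := myRangeDiff hm hn
  set d : ℕ := (Set.range n \ Set.range m).ncard
  have he : Tendsto (fun len : ℕ => (d : ℝ) / len) atTop (nhds 0) :=
    tendsto_const_div_atTop_nhds_zero_nat (d : ℝ)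
  refine myLimsupLe (fun l => (myBound hni l).1) (fun l => (myBound hmi l).2) he ?_
  intro len
  rcases Nat.eq_zero_or_pos len with h | h
  · subst h
    have h1 : ∀ (p : ℕ → ℕ) (i : ℕ), (windowCount p i 0 : ℝ) / 0 = 0 := by
      intro p i; simp
    simp only [h1, ciSup_const, Nat.cast_zero, div_zero, add_zero, le_refl]
  · refine ciSup_le fun i => ?_
    have hw : (windowCount n i len : ℝ) ≤ windowCount m i len + d := by
      exact_mod_cast myWc_diff hni hmi hfin i len
    have hlen : (0 : ℝ) < len := by exact_mod_cast h
    have h1 : (windowCount n i len : ℝ) / len ≤ (windowCount m i len : ℝ) / len + d / len := by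
      rw [← add_div, div_le_div_iff_of_pos_right hlen]; exact hw
    refine h1.trans (add_le_add_left ?_ _)
    have hbdd : BddAbove (Set.range fun j => (windowCount m j len : ℝ) / len) := by
      refine ⟨1, ?_⟩
      rintro y ⟨j, rfl⟩
      simp only [div_le_one hlen]
      exact_mod_cast myWc_le hmi j len
    exact le_ciSup hbdd i

lemma myLowerLe {x : ℕ → ℝ} {a : ℝ} {n m : ℕ → ℕ}
    (hn : IsEssentialSubseq x a n) (hm : IsEssentialSubseq x a m) :
    lowerWeight m ≤ lowerWeight n := by
  have hni : Function.Injective n := hn.1.injective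
  have hmi : Function.Injective m := hm.1.injective
  have hfin : (Set.range m \ Set.range n).Finite := myRangeDiff hn hm
  set d : ℕ := (Set.range m \ Set.range n).ncard
  have he : Tendsto (fun len : ℕ => (d : ℝ) / len) atTop (nhds 0) :=
    tendsto_const_div_atTop_nhds_zero_nat (d : ℝ)
  refine myLiminfLe (fun l => (myBoundInf hni l).2) (fun l => (myBoundInf hmi l).1) he ?_
  intro len
  rcases Nat.eq_zero_or_pos len with h | h
  · subst h
    have := (myBoundInf hmi 0).2
    have := (myBoundInf hni 0).1
    simp only [Nat.cast_zero, div_zero] at *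
    linarith
  · have hlen : (0 : ℝ) < len := by exact_mod_cast h
    refine le_ciInf fun i => ?_
    have hw : (windowCount m i len : ℝ) ≤ windowCount n i len + d := by
      exact_mod_cast myWc_diff hmi hni hfin i len
    have h1 : (windowCount m i len : ℝ) / len - d / len ≤ (windowCount n i len : ℝ) / len := by
      rw [sub_le_iff_le_add, ← add_div, div_le_div_iff_of_pos_right hlen]; exact hw
    refine le_trans (sub_le_sub_right ?_ _) h1
    exact ciInf_le ⟨0, by rintro y ⟨j, rfl⟩; positivity⟩ i

/-- Any two essential subsequences of a sub-limit `a` of a bounded sequence `x`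
have the same upper weight and the same lower weight. -/
theorem essentialSubseq_weights_eq (x : ℕ → ℝ) (hx : IsBddSeq x) (a : ℝ)
    (ha : IsSubLimit x a) (n m : ℕ → ℕ)
    (hn : IsEssentialSubseq x a n) (hm : IsEssentialSubseq x a m) :
    upperWeight n = upperWeight m ∧ lowerWeight n = lowerWeight m := by
  constructor
  · exact le_antisymm (myUpperLe hn hm) (myUpperLe hm hn)
  · exact le_antisymm (myLowerLe hm hn) (myLowerLe hn hm)
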